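/- arXiv:2512.00821 — 3 statements merged into one kernel-verified Lean document; each statement's English description precedes it below -/
import Mathlib

section
/- Let S and T be nonempty finite sets of points in EuclideanSpace ℝ (Fin 2), and let λ > 0 be a real number. Then the set {θ ∈ Set.Ico 0 (2π) : |max_{v ∈ S} ⟪v, ω(θ)⟫ − max_{w ∈ T} ⟪w, ω(θ)⟫| = λ} is finite, where ω(θ) denotes the unit direction with coordinates (cos θ, sin θ). -/
open Real

lemma analyticOnNhd_rcos : AnalyticOnNhd ℝ Real.cos Set.univ := by
  have h : Real.cos = fun x : ℝ => Complex.reCLM (Complex.cos (Complex.ofRealCLM x)) := by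
    funext x; simp [Complex.cos_ofReal_re]
  rw [h]
  intro x _
  exact (Complex.reCLM.analyticAt _).comp
    (((Complex.differentiable_cos.analyticAt _).restrictScalars).comp
      (Complex.ofRealCLM.analyticAt x))

lemma analyticOnNhd_rsin : AnalyticOnNhd ℝ Real.sin Set.univ := by
  have h : Real.sin = fun x : ℝ => Complex.reCLM (Complex.sin (Complex.ofRealCLM x)) := by
    funext x; simp [Complex.sin_ofReal_re]
  rw [h]
  intro x _
  exact (Complex.reCLM.analyticAt _).comp
    (((Complex.differentiable_sin.analyticAt _).restrictScalars).comp
      (Complex.ofRealCLM.analyticAt x))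

lemma trig_zero_finite (a b c : ℝ) (hc : c ≠ 0) :
    {θ ∈ Set.Ico 0 (2 * π) | a * Real.cos θ + b * Real.sin θ = c}.Finite := by
  set f : ℝ → ℝ := fun θ => a * Real.cos θ + b * Real.sin θ - c with hf_def
  have hf : AnalyticOnNhd ℝ f Set.univ := fun x hx =>
    ((analyticAt_const.mul (analyticOnNhd_rcos x hx)).add
      (analyticAt_const.mul (analyticOnNhd_rsin x hx))).sub analyticAt_const
  by_contra hinf
  have hZ : {θ ∈ Set.Ico 0 (2 * π) | a * Real.cos θ + b * Real.sin θ = c}.Infinite := hinf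
  have hsub : {θ ∈ Set.Ico 0 (2 * π) | a * Real.cos θ + b * Real.sin θ = c} ⊆
      Set.Icc 0 (2 * π) := fun θ hθ => Set.Ico_subset_Icc_self hθ.1
  obtain ⟨x, -, hacc⟩ := hZ.exists_accPt_of_subset_isCompact isCompact_Icc hsub
  have hfreq : ∃ᶠ y in nhdsWithin x {x}ᶜ, f y = 0 := by
    rw [accPt_iff_frequently] at hacc
    rw [frequently_nhdsWithin_iff]
    refine hacc.mono ?_
    rintro y ⟨hy1, -, hy2⟩
    exact ⟨by simp [hf_def, hy2], by simpa using hy1⟩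
  have heq : Set.EqOn f 0 Set.univ :=
    hf.eqOn_zero_of_preconnected_of_frequently_eq_zero isPreconnected_univ
      (Set.mem_univ x) hfreq
  have h0 : f 0 = 0 := heq (Set.mem_univ 0)
  have hπ : f π = 0 := heq (Set.mem_univ π)
  simp only [hf_def, Real.cos_zero, Real.sin_zero, Real.cos_pi, Real.sin_pi] at h0 hπ
  apply hc
  linarith

theorem difference_curve_threshold_finite
    (S T : Finset (EuclideanSpace ℝ (Fin 2))) (hS : S.Nonempty) (hT : T.Nonempty)
    (lam : ℝ) (hlam : 0 < lam) :
    {θ ∈ Set.Ico 0 (2 * π) |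
      |(S.sup' hS fun v =>
          (inner ℝ v ((WithLp.equiv 2 (Fin 2 → ℝ)).symm ![Real.cos θ, Real.sin θ]) : ℝ)) -
        (T.sup' hT fun w =>
          (inner ℝ w ((WithLp.equiv 2 (Fin 2 → ℝ)).symm ![Real.cos θ, Real.sin θ]) : ℝ))|
        = lam}.Finite := by
  have hbig : (⋃ v ∈ S, ⋃ w ∈ T,
      ({θ ∈ Set.Ico 0 (2 * π) |
          (v 0 - w 0) * Real.cos θ + (v 1 - w 1) * Real.sin θ = lam} ∪
       {θ ∈ Set.Ico 0 (2 * π) |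
          (v 0 - w 0) * Real.cos θ + (v 1 - w 1) * Real.sin θ = -lam})).Finite := by
    refine Set.Finite.biUnion S.finite_toSet fun v _ =>
      Set.Finite.biUnion T.finite_toSet fun w _ =>
        (trig_zero_finite _ _ lam hlam.ne').union
          (trig_zero_finite _ _ (-lam) (by simpa using hlam.ne'))
  refine hbig.subset ?_
  rintro θ ⟨hθI, heq⟩
  obtain ⟨v, hv, hvEq⟩ := S.exists_mem_eq_sup' hS fun v =>
    (inner ℝ v ((WithLp.equiv 2 (Fin 2 → ℝ)).symm ![Real.cos θ, Real.sin θ]) : ℝ)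
  obtain ⟨w, hw, hwEq⟩ := T.exists_mem_eq_sup' hT fun w =>
    (inner ℝ w ((WithLp.equiv 2 (Fin 2 → ℝ)).symm ![Real.cos θ, Real.sin θ]) : ℝ)
  rw [hvEq, hwEq] at heq
  have hv' : (inner ℝ v ((WithLp.equiv 2 (Fin 2 → ℝ)).symm ![Real.cos θ, Real.sin θ]) : ℝ)
      = v 0 * Real.cos θ + v 1 * Real.sin θ := by
    simp [PiLp.inner_apply, RCLike.inner_apply, Fin.sum_univ_two, WithLp.equiv_symm_apply,
      mul_comm]
  have hw' : (inner ℝ w ((WithLp.equiv 2 (Fin 2 → ℝ)).symm ![Real.cos θ, Real.sin θ]) : ℝ)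
      = w 0 * Real.cos θ + w 1 * Real.sin θ := by
    simp [PiLp.inner_apply, RCLike.inner_apply, Fin.sum_univ_two, WithLp.equiv_symm_apply,
      mul_comm]
  rw [hv', hw'] at heq
  rw [abs_eq hlam.le] at heq
  simp only [Set.mem_iUnion]
  refine ⟨v, hv, w, hw, ?_⟩
  rcases heq with h | h
  · exact Or.inl ⟨hθI, by linarith [h]⟩
  · exact Or.inr ⟨hθI, by linarith [h]⟩
end

section
/- Let S be a finite set of points in EuclideanSpace ℝ (Fin 2). Then the set of θ ∈ Set.Ico 0 (2π) for which there exist two distinct points u, v ∈ S with ⟪u, ω(θ)⟫ = ⟪v, ω(θ)⟫ = max_{p ∈ S} ⟪p, ω(θ)⟫ is finite, where ω(θ) denotes the unit direction with coordinates (cos θ, sin θ). -/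
open Real

lemma injOn_cos_sin : Set.InjOn (fun θ : ℝ => (Real.cos θ, Real.sin θ)) (Set.Ico 0 (2 * π)) := by
  intro x hx y hy h
  have hc : Real.cos x = Real.cos y := congrArg Prod.fst h
  have hs : Real.sin x = Real.sin y := congrArg Prod.snd h
  have hang : (x : Real.Angle) = y := Real.Angle.cos_sin_inj hc hs
  obtain ⟨k, hk⟩ := Real.Angle.angle_eq_iff_two_pi_dvd_sub.1 hang
  have hpi := Real.pi_pos
  have hb : |x - y| < 2 * π := by
    rw [abs_sub_lt_iff]
    constructor <;> nlinarith [hx.1, hx.2, hy.1, hy.2]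
  have hk0 : k = 0 := by
    by_contra hk0
    have : (1 : ℝ) ≤ |(k : ℝ)| := by
      exact_mod_cast Int.one_le_abs (by exact_mod_cast hk0)
    rw [hk, abs_mul, abs_of_pos (by positivity : (0:ℝ) < 2 * π)] at hb
    nlinarith
  rw [hk0] at hk
  simp at hk
  linarith

lemma finite_lin_zero (a b : ℝ) (hab : ¬(a = 0 ∧ b = 0)) :
    {θ ∈ Set.Ico 0 (2 * π) | a * Real.cos θ + b * Real.sin θ = 0}.Finite := by
  have hr2pos : 0 < a ^ 2 + b ^ 2 := by
    rcases not_and_or.1 hab with h | h <;> positivity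
  set r := Real.sqrt (a ^ 2 + b ^ 2) with hrdef
  have hrpos : 0 < r := Real.sqrt_pos.2 hr2pos
  have hrsq : r ^ 2 = a ^ 2 + b ^ 2 := Real.sq_sqrt hr2pos.le
  have key : ∀ θ ∈ {θ ∈ Set.Ico 0 (2 * π) | a * Real.cos θ + b * Real.sin θ = 0},
      (Real.cos θ, Real.sin θ) ∈ ({(-b / r, a / r), (b / r, -a / r)} : Set (ℝ × ℝ)) := by
    intro θ hθ
    obtain ⟨-, hz⟩ := hθ
    set x := Real.cos θ with hxdef
    set y := Real.sin θ with hydef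
    have hxy : x ^ 2 + y ^ 2 = 1 := by
      have := Real.sin_sq_add_cos_sq θ
      rw [← hxdef, ← hydef] at this
      linarith
    have hs2 : (-b * x + a * y - r) * (-b * x + a * y + r) = 0 := by
      linear_combination (a ^ 2 + b ^ 2) * hxy - (a * x + b * y) * hz - hrsq
    simp only [Set.mem_insert_iff, Set.mem_singleton_iff, Prod.mk.injEq]
    rcases mul_eq_zero.1 hs2 with h | h
    · have h : -b * x + a * y = r := by linarith
      left
      constructor
      · rw [eq_div_iff hrpos.ne']
        have h0 : (a ^ 2 + b ^ 2) * (x * r + b) = 0 := by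
          linear_combination r * a * hz - r * b * h - b * hrsq
        have := mul_eq_zero.1 h0
        rcases this with h1 | h1
        · exact absurd h1 hr2pos.ne'
        · linarith
      · rw [eq_div_iff hrpos.ne']
        have h0 : (a ^ 2 + b ^ 2) * (y * r - a) = 0 := by
          linear_combination r * b * hz + r * a * h + a * hrsq
        rcases mul_eq_zero.1 h0 with h1 | h1
        · exact absurd h1 hr2pos.ne'
        · linarith
    · have h : -b * x + a * y = -r := by linarith
      right
      constructor
      · rw [eq_div_iff hrpos.ne']
        have h0 : (a ^ 2 + b ^ 2) * (x * r - b) = 0 := by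
          linear_combination r * a * hz - r * b * h + b * hrsq
        rcases mul_eq_zero.1 h0 with h1 | h1
        · exact absurd h1 hr2pos.ne'
        · linarith
      · rw [eq_div_iff hrpos.ne']
        have h0 : (a ^ 2 + b ^ 2) * (y * r + a) = 0 := by
          linear_combination r * b * hz + r * a * h - a * hrsq
        rcases mul_eq_zero.1 h0 with h1 | h1
        · exact absurd h1 hr2pos.ne'
        · linarith
  have hfin : ({(-b / r, a / r), (b / r, -a / r)} : Set (ℝ × ℝ)).Finite :=
    (Set.finite_singleton _).insert _
  have himg : ((fun θ : ℝ => (Real.cos θ, Real.sin θ)) ''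
      {θ ∈ Set.Ico 0 (2 * π) | a * Real.cos θ + b * Real.sin θ = 0}).Finite :=
    hfin.subset (by rintro p ⟨θ, hθ, rfl⟩; exact key θ hθ)
  exact Set.Finite.of_finite_image himg (injOn_cos_sin.mono (fun θ hθ => hθ.1))

theorem active_vertex_transitions_finite (S : Finset (EuclideanSpace ℝ (Fin 2))) :
    {θ ∈ Set.Ico 0 (2 * π) |
      ∃ u ∈ S, ∃ v ∈ S, u ≠ v ∧
        (inner ℝ u ((WithLp.equiv 2 (Fin 2 → ℝ)).symm ![Real.cos θ, Real.sin θ]) : ℝ) =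
          (inner ℝ v ((WithLp.equiv 2 (Fin 2 → ℝ)).symm ![Real.cos θ, Real.sin θ]) : ℝ) ∧
        (∀ p ∈ S,
          (inner ℝ p ((WithLp.equiv 2 (Fin 2 → ℝ)).symm ![Real.cos θ, Real.sin θ]) : ℝ) ≤
            (inner ℝ u ((WithLp.equiv 2 (Fin 2 → ℝ)).symm ![Real.cos θ, Real.sin θ]) : ℝ))}.Finite := by
  classical
  have hsub : {θ ∈ Set.Ico 0 (2 * π) |
      ∃ u ∈ S, ∃ v ∈ S, u ≠ v ∧
        (inner ℝ u ((WithLp.equiv 2 (Fin 2 → ℝ)).symm ![Real.cos θ, Real.sin θ]) : ℝ) =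
          (inner ℝ v ((WithLp.equiv 2 (Fin 2 → ℝ)).symm ![Real.cos θ, Real.sin θ]) : ℝ) ∧
        (∀ p ∈ S,
          (inner ℝ p ((WithLp.equiv 2 (Fin 2 → ℝ)).symm ![Real.cos θ, Real.sin θ]) : ℝ) ≤
            (inner ℝ u ((WithLp.equiv 2 (Fin 2 → ℝ)).symm ![Real.cos θ, Real.sin θ]) : ℝ))} ⊆
      ⋃ q ∈ ((S ×ˢ S).filter (fun q => q.1 ≠ q.2) : Finset _),
        {θ ∈ Set.Ico 0 (2 * π) |
          (q.1 0 - q.2 0) * Real.cos θ + (q.1 1 - q.2 1) * Real.sin θ = 0} := by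
    rintro θ ⟨hθ, u, hu, v, hv, huv, heq, -⟩
    have hmem : ((u, v) : _ × _) ∈ (S ×ˢ S).filter (fun q => q.1 ≠ q.2) :=
      Finset.mem_filter.2 ⟨Finset.mem_product.2 ⟨hu, hv⟩, huv⟩
    refine Set.mem_biUnion hmem ⟨hθ, ?_⟩
    have h1 : (inner ℝ u ((WithLp.equiv 2 (Fin 2 → ℝ)).symm ![Real.cos θ, Real.sin θ]) : ℝ)
        = u 0 * Real.cos θ + u 1 * Real.sin θ := by
      simp [PiLp.inner_apply, Fin.sum_univ_two, mul_comm]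
    have h2 : (inner ℝ v ((WithLp.equiv 2 (Fin 2 → ℝ)).symm ![Real.cos θ, Real.sin θ]) : ℝ)
        = v 0 * Real.cos θ + v 1 * Real.sin θ := by
      simp [PiLp.inner_apply, Fin.sum_univ_two, mul_comm]
    rw [h1, h2] at heq
    ring_nf
    ring_nf at heq
    linarith
  refine Set.Finite.subset ?_ hsub
  refine Set.Finite.biUnion (Finset.finite_toSet _) ?_
  intro q hq
  obtain ⟨-, hne⟩ := Finset.mem_filter.1 hq
  apply finite_lin_zero
  rintro ⟨h0, h1⟩
  apply hne
  ext i
  fin_cases i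
  · simpa using sub_eq_zero.1 h0
  · simpa using sub_eq_zero.1 h1
end

section
/- Let v be a unit vector in EuclideanSpace ℝ (Fin 3) and consider the stereographic projection from the pole v, the map sending a point x of the unit sphere with x ≠ v to (2 / (1 − ⟪v, x⟫)) • (orthogonal projection of x onto (ℝ∙v)ᗮ) in the orthogonal complement of the span of v. Let n be a nonzero vector in EuclideanSpace ℝ (Fin 3) and let C = {x : ‖x‖ = 1 ∧ ⟪n, x⟫ = 0 ∧ x ≠ v} be the great circle determined by n with the pole removed. Then the image of C under the stereographic projection is contained in a circle or a line: there exist a center c and radius ρ with every image point y satisfying ‖y − c‖ = ρ, or there exist a point p and a nonzero direction w such that every image point y equals p + t • w for some real t. -/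
theorem stereographic_image_of_great_circle
    (v : EuclideanSpace ℝ (Fin 3)) (hv : ‖v‖ = 1)
    (n : EuclideanSpace ℝ (Fin 3)) (hn : n ≠ 0) :
    (∃ (c : (ℝ ∙ v)ᗮ) (ρ : ℝ),
      ∀ x : EuclideanSpace ℝ (Fin 3), ‖x‖ = 1 → (inner ℝ n x : ℝ) = 0 → x ≠ v →
        ‖((2 / (1 - (inner ℝ v x : ℝ))) • (Submodule.orthogonalProjectionOnto (ℝ ∙ v)ᗮ x : (ℝ ∙ v)ᗮ)) - c‖ = ρ) ∨
    (∃ (p w : (ℝ ∙ v)ᗮ), w ≠ 0 ∧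
      ∀ x : EuclideanSpace ℝ (Fin 3), ‖x‖ = 1 → (inner ℝ n x : ℝ) = 0 → x ≠ v →
        ∃ t : ℝ,
          ((2 / (1 - (inner ℝ v x : ℝ))) • (Submodule.orthogonalProjectionOnto (ℝ ∙ v)ᗮ x : (ℝ ∙ v)ᗮ))
            = p + t • w) := by
  classical
  have hv0 : v ≠ 0 := by intro h; rw [h, norm_zero] at hv; norm_num at hv
  have hvv : (inner ℝ v v : ℝ) = 1 := by rw [real_inner_self_eq_norm_sq, hv]; norm_num
  by_cases hα : (inner ℝ v n : ℝ) = 0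
  · -- line case
    right
    have hnS : n ∈ (ℝ ∙ v)ᗮ :=
      Submodule.mem_orthogonal_singleton_iff_inner_right.mpr hα
    have hfinE : Module.finrank ℝ (EuclideanSpace ℝ (Fin 3)) = 3 := by simp
    have hfin : Module.finrank ℝ ((ℝ ∙ v)ᗮ : Submodule ℝ (EuclideanSpace ℝ (Fin 3))) = 2 := by
      have h1 : Module.finrank ℝ (ℝ ∙ v) = 1 := finrank_span_singleton hv0
      have h2 := Submodule.finrank_add_finrank_orthogonal (𝕜 := ℝ) (ℝ ∙ v)
      omega
    have hN0 : (⟨n, hnS⟩ : (ℝ ∙ v)ᗮ) ≠ 0 := by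
      intro h
      apply hn
      simpa [Submodule.mk_eq_zero] using h
    have hK : Module.finrank ℝ
        ((ℝ ∙ (⟨n, hnS⟩ : (ℝ ∙ v)ᗮ))ᗮ : Submodule ℝ ((ℝ ∙ v)ᗮ : Submodule ℝ (EuclideanSpace ℝ (Fin 3)))) = 1 := by
      have h1 : Module.finrank ℝ (ℝ ∙ (⟨n, hnS⟩ : (ℝ ∙ v)ᗮ)) = 1 := finrank_span_singleton hN0
      have h2 := Submodule.finrank_add_finrank_orthogonal (𝕜 := ℝ) (ℝ ∙ (⟨n, hnS⟩ : (ℝ ∙ v)ᗮ))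
      omega
    obtain ⟨w0, hw0, hall⟩ := finrank_eq_one_iff'.mp hK
    refine ⟨0, (w0 : (ℝ ∙ v)ᗮ), by simpa using hw0, ?_⟩
    intro x hx hnx hxv
    have hyE : (((2 / (1 - (inner ℝ v x : ℝ))) • (Submodule.orthogonalProjectionOnto (ℝ ∙ v)ᗮ x : (ℝ ∙ v)ᗮ) :
        (ℝ ∙ v)ᗮ) : EuclideanSpace ℝ (Fin 3)) =
        (2 / (1 - (inner ℝ v x : ℝ))) • (x - (inner ℝ v x : ℝ) • v) := by
      rw [Submodule.coe_smul, ← Submodule.starProjection_apply, Submodule.starProjection_orthogonal_val,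
        Submodule.starProjection_singleton, hv]
      norm_num
    have hyK : ((2 / (1 - (inner ℝ v x : ℝ))) • (Submodule.orthogonalProjectionOnto (ℝ ∙ v)ᗮ x : (ℝ ∙ v)ᗮ)) ∈
        (ℝ ∙ (⟨n, hnS⟩ : (ℝ ∙ v)ᗮ))ᗮ := by
      rw [Submodule.mem_orthogonal_singleton_iff_inner_right, Submodule.coe_inner]
      have hnv : (inner ℝ n v : ℝ) = 0 := by rwa [real_inner_comm]
      show (inner ℝ n _ : ℝ) = 0
      rw [hyE, real_inner_smul_right, inner_sub_right, real_inner_smul_right, hnx, hnv]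
      ring
    obtain ⟨t, ht⟩ := hall ⟨_, hyK⟩
    refine ⟨t, ?_⟩
    have h2 := congrArg (Subtype.val) (congrArg (Subtype.val) ht)
    rw [zero_add]
    exact Subtype.ext h2.symm
  · -- circle case
    left
    refine ⟨(-(2 / (inner ℝ v n : ℝ))) • (Submodule.orthogonalProjectionOnto (ℝ ∙ v)ᗮ n),
      2 * ‖n‖ / |(inner ℝ v n : ℝ)|, ?_⟩
    intro x hx hnx hxv
    have ha1 : (inner ℝ v x : ℝ) ≠ 1 := by
      intro h
      exact hxv (((inner_eq_one_iff_of_norm_eq_one hv hx).mp h).symm)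
    have h1a : (1 : ℝ) - (inner ℝ v x : ℝ) ≠ 0 := sub_ne_zero.mpr (Ne.symm ha1)
    have hzE : ((((2 / (1 - (inner ℝ v x : ℝ))) • (Submodule.orthogonalProjectionOnto (ℝ ∙ v)ᗮ x : (ℝ ∙ v)ᗮ)) -
        (-(2 / (inner ℝ v n : ℝ))) • (Submodule.orthogonalProjectionOnto (ℝ ∙ v)ᗮ n) : (ℝ ∙ v)ᗮ) :
          EuclideanSpace ℝ (Fin 3)) =
        (2 / (1 - (inner ℝ v x : ℝ))) • (x - (inner ℝ v x : ℝ) • v) +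
          (2 / (inner ℝ v n : ℝ)) • (n - (inner ℝ v n : ℝ) • v) := by
      rw [Submodule.coe_sub, Submodule.coe_smul, Submodule.coe_smul,
        ← Submodule.starProjection_apply, Submodule.starProjection_orthogonal_val, ← Submodule.starProjection_apply, Submodule.starProjection_orthogonal_val,
        Submodule.starProjection_singleton, Submodule.starProjection_singleton, hv]
      simp only [one_pow, RCLike.ofReal_one, div_one]
      module
    have hxx : (inner ℝ x x : ℝ) = 1 := by rw [real_inner_self_eq_norm_sq, hx]; norm_num
    have hxv' : (inner ℝ x v : ℝ) = (inner ℝ v x : ℝ) := real_inner_comm v x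
    have hnx' : (inner ℝ x n : ℝ) = 0 := by rwa [real_inner_comm]
    have hnv : (inner ℝ n v : ℝ) = (inner ℝ v n : ℝ) := real_inner_comm v n
    have hnn : (inner ℝ n n : ℝ) = ‖n‖^2 := real_inner_self_eq_norm_sq n
    have hz2 : ‖((((2 / (1 - (inner ℝ v x : ℝ))) • (Submodule.orthogonalProjectionOnto (ℝ ∙ v)ᗮ x : (ℝ ∙ v)ᗮ)) -
        (-(2 / (inner ℝ v n : ℝ))) • (Submodule.orthogonalProjectionOnto (ℝ ∙ v)ᗮ n) : (ℝ ∙ v)ᗮ) :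
          EuclideanSpace ℝ (Fin 3))‖^2 = (2 * ‖n‖ / |(inner ℝ v n : ℝ)|)^2 := by
      rw [← real_inner_self_eq_norm_sq, hzE]
      simp only [inner_add_left, inner_add_right, inner_sub_left, inner_sub_right,
        real_inner_smul_left, real_inner_smul_right,
        hxx, hvv, hxv', hnx', hnv, hnn, hnx]
      rw [div_pow, mul_pow, sq_abs]
      obtain ⟨A, hA⟩ : ∃ A, (inner ℝ v x : ℝ) = A := ⟨_, rfl⟩
      obtain ⟨B, hB⟩ : ∃ B, (inner ℝ v n : ℝ) = B := ⟨_, rfl⟩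
      rw [hA] at h1a
      rw [hB] at hα
      rw [hA, hB]
      field_simp
      ring
    have hnorm : ‖(((2 / (1 - (inner ℝ v x : ℝ))) • (Submodule.orthogonalProjectionOnto (ℝ ∙ v)ᗮ x : (ℝ ∙ v)ᗮ)) -
        (-(2 / (inner ℝ v n : ℝ))) • (Submodule.orthogonalProjectionOnto (ℝ ∙ v)ᗮ n) : (ℝ ∙ v)ᗮ)‖ =
        ‖((((2 / (1 - (inner ℝ v x : ℝ))) • (Submodule.orthogonalProjectionOnto (ℝ ∙ v)ᗮ x : (ℝ ∙ v)ᗮ)) -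
        (-(2 / (inner ℝ v n : ℝ))) • (Submodule.orthogonalProjectionOnto (ℝ ∙ v)ᗮ n) : (ℝ ∙ v)ᗮ) :
          EuclideanSpace ℝ (Fin 3))‖ := Submodule.coe_norm _
    rw [hnorm]
    have h1 := congrArg Real.sqrt hz2
    rwa [Real.sqrt_sq (norm_nonneg _), Real.sqrt_sq (by positivity)] at h1
end
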